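/- Define Φ_d : (ℝ_{≥0})^d → ℝ[x] recursively by Φ₀ = 1, Φ₁(t₀) = x + t₀, and Φ_d(t₀,…,t_{d−1}) = (x − t_{d−2})²·Φ_{d−2}(t₀,…,t_{d−3}) + t_{d−1}·x for d ≥ 2. Then Φ_d is surjective onto C_d: every monic copositive polynomial of degree d equals Φ_d(t₀,…,t_{d−1}) for some t₀,…,t_{d−1} ≥ 0. -/

import Mathlib

open Polynomial Filter Topology Set

lemma eval_nonneg_of_nonneg_Ioi (q : ℝ[X]) (s : ℝ) (h : ∀ x ∈ Set.Ioi s, 0 ≤ q.eval x) :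
    0 ≤ q.eval s := by
  have hc : Tendsto (fun x => q.eval x) (𝓝[>] s) (𝓝 (q.eval s)) :=
    (q.continuous.continuousAt).continuousWithinAt
  exact ge_of_tendsto hc (eventually_nhdsWithin_of_forall h)

lemma double_dvd (h : ℝ[X]) (s : ℝ) (h0 : h.eval s = 0) (h1 : h.derivative.eval s = 0) :
    (X - C s) ^ 2 ∣ h := by
  obtain ⟨k, hk⟩ := dvd_iff_isRoot.2 h0
  have hk0 : k.eval s = 0 := by
    have := hk ▸ h1
    simp [derivative_mul] at this
    simpa using this
  obtain ⟨m, hm⟩ := dvd_iff_isRoot.2 hk0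
  exact ⟨m, by rw [hk, hm]; ring⟩

lemma deriv_zero_of_min (h : ℝ[X]) (s : ℝ) (hs : 0 < s) (h0 : h.eval s = 0)
    (hnn : ∀ x : ℝ, 0 ≤ x → 0 ≤ h.eval x) : h.derivative.eval s = 0 := by
  have hmin : IsLocalMin (fun x => h.eval x) s := by
    filter_upwards [Ioi_mem_nhds hs] with x hx
    simpa [h0] using hnn x (le_of_lt hx)
  have := hmin.deriv_eq_zero
  rwa [Polynomial.deriv] at this

lemma exists_bound (p : ℝ[X]) (hp : p.Monic) (h : 0 < p.natDegree) :
    ∃ b : ℝ, 1 ≤ b ∧ ∀ x, b ≤ x → 0 < p.eval x := by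
  have ht : Tendsto (fun x => eval x p) atTop atTop :=
    p.tendsto_atTop_of_leadingCoeff_nonneg (natDegree_pos_iff_degree_pos.mp h)
      (by rw [hp.leadingCoeff]; norm_num)
  obtain ⟨a, ha⟩ := (ht.eventually_gt_atTop 0).exists_forall_of_atTop
  exact ⟨max a 1, le_max_right _ _, fun x hx => ha x (le_trans (le_max_left a 1) hx)⟩

lemma finish_step (d : ℕ) (f : ℝ[X]) (hm : f.Monic) (hd : f.natDegree = d + 2)
    (s t : ℝ) (hs : 0 ≤ s) (ht : 0 ≤ t)
    (hh : ∀ x : ℝ, 0 ≤ x → 0 ≤ (f - C t * X).eval x)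
    (hdvd : (X - C s) ^ 2 ∣ (f - C t * X)) :
    ∃ q : ℝ[X], q.Monic ∧ q.natDegree = d ∧ (∀ x : ℝ, 0 ≤ x → 0 ≤ q.eval x) ∧
      f = (X - C s) ^ 2 * q + C t * X := by
  obtain ⟨q, hq⟩ := hdvd
  have hmon2 : ((X - C s) ^ 2).Monic := (monic_X_sub_C s).pow 2
  have hdegf : f.degree = (d + 2 : ℕ) := by rw [← hd]; exact (degree_eq_natDegree hm.ne_zero)
  have hdlt : (-(C t * X)).degree < f.degree := by
    rw [degree_neg, hdegf]
    have h1 : (C t * X).degree ≤ (1 : WithBot ℕ) := le_trans (degree_mul_le _ _)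
      (by simpa using add_le_add (degree_C_le (a := t)) (degree_X_le (R := ℝ)))
    refine lt_of_le_of_lt h1 ?_
    exact_mod_cast (by omega : (1 : ℕ) < d + 2)
  have hhm : (f - C t * X).Monic := by
    rw [sub_eq_add_neg]; exact hm.add_of_left hdlt
  have hhd : (f - C t * X).natDegree = d + 2 := by
    apply natDegree_eq_of_degree_eq_some
    rw [sub_eq_add_neg, degree_add_eq_left_of_degree_lt hdlt, hdegf]
  have hqm : q.Monic := hmon2.of_mul_monic_left (hq ▸ hhm)
  have hqd : q.natDegree = d := by
    have := hq ▸ hhd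
    rw [natDegree_mul hmon2.ne_zero hqm.ne_zero, natDegree_pow, natDegree_X_sub_C] at this
    omega
  have hqnn : ∀ x : ℝ, 0 ≤ x → 0 ≤ q.eval x := by
    have hne : ∀ x : ℝ, x ≠ s → 0 ≤ x → 0 ≤ q.eval x := by
      intro x hxs hx
      have h1 := hh x hx
      rw [hq] at h1
      simp only [eval_mul, eval_pow, eval_sub, eval_X, eval_C] at h1
      have hpos : 0 < (x - s) ^ 2 :=
        lt_of_le_of_ne (sq_nonneg _) (Ne.symm (pow_ne_zero 2 (sub_ne_zero.2 hxs)))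
      exact (mul_nonneg_iff_of_pos_left hpos).mp h1
    intro x hx
    rcases eq_or_ne x s with rfl | hxs
    · exact eval_nonneg_of_nonneg_Ioi q x (fun y hy => hne y (ne_of_gt hy) (le_trans hx (le_of_lt hy)))
    · exact hne x hxs hx
  exact ⟨q, hqm, hqd, hqnn, by rw [← hq]; ring⟩
lemma key_step (d : ℕ) (f : ℝ[X]) (hm : f.Monic) (hd : f.natDegree = d + 2)
    (hc : ∀ x : ℝ, 0 ≤ x → 0 ≤ f.eval x) :
    ∃ (s t : ℝ) (q : ℝ[X]), 0 ≤ s ∧ 0 ≤ t ∧ q.Monic ∧ q.natDegree = d ∧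
      (∀ x : ℝ, 0 ≤ x → 0 ≤ q.eval x) ∧ f = (X - C s) ^ 2 * q + C t * X := by
  rcases (hc 0 le_rfl).eq_or_lt with hf0 | hf0
  · -- Case B : f(0) = 0
    set g := f.divX with hgdef
    have hfg : f = X * g := by
      have h1 := f.X_mul_divX_add
      rw [f.coeff_zero_eq_eval_zero, ← hf0] at h1
      simpa using h1.symm
    have hgm : g.Monic := monic_X.of_mul_monic_left (hfg ▸ hm)
    have hgd : g.natDegree = d + 1 := by
      have := hfg ▸ hd
      rw [natDegree_mul X_ne_zero hgm.ne_zero, natDegree_X] at this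
      omega
    have hgIoi : ∀ x ∈ Set.Ioi (0:ℝ), 0 ≤ g.eval x := by
      intro x hx
      have := hc x (le_of_lt hx)
      rw [hfg, eval_mul, eval_X] at this
      exact (mul_nonneg_iff_of_pos_left hx).mp this
    have hgnn : ∀ x : ℝ, 0 ≤ x → 0 ≤ g.eval x := by
      intro x hx
      rcases hx.eq_or_lt with rfl | hx
      · exact eval_nonneg_of_nonneg_Ioi g 0 hgIoi
      · exact hgIoi x hx
    -- a bound beyond which g(x) > g(0)
    have hpm : (g - C (g.eval 0)).Monic := by
      rw [sub_eq_add_neg]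
      refine hgm.add_of_left ?_
      rw [degree_neg]
      refine lt_of_le_of_lt (degree_C_le) ?_
      rw [degree_eq_natDegree hgm.ne_zero, hgd]
      exact_mod_cast (by omega : (0 : ℕ) < d + 1)
    have hpd : 0 < (g - C (g.eval 0)).natDegree := by
      have : (g - C (g.eval 0)).natDegree = d + 1 := by
        apply natDegree_eq_of_degree_eq_some
        rw [sub_eq_add_neg, degree_add_eq_left_of_degree_lt, degree_eq_natDegree hgm.ne_zero, hgd]
        rw [degree_neg]
        refine lt_of_le_of_lt (degree_C_le) ?_
        rw [degree_eq_natDegree hgm.ne_zero, hgd]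
        exact_mod_cast (by omega : (0 : ℕ) < d + 1)
      omega
    obtain ⟨b, hb1, hb⟩ := exists_bound _ hpm hpd
    -- minimize g on [0, b]
    obtain ⟨s, hsmem, hsmin⟩ := isCompact_Icc.exists_isMinOn (Set.nonempty_Icc.2 (by linarith))
      (g.continuous.continuousOn (s := Set.Icc (0:ℝ) b))
    have hsmin' : ∀ x ∈ Set.Icc (0:ℝ) b, g.eval s ≤ g.eval x := fun x hx => hsmin hx
    set t := g.eval s with htdef
    have hts : 0 ≤ t := hgnn s hsmem.1
    have hglb : ∀ x : ℝ, 0 ≤ x → t ≤ g.eval x := by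
      intro x hx
      rcases le_or_gt x b with hxb | hxb
      · exact hsmin' x ⟨hx, hxb⟩
      · have h1 := hb x (le_of_lt hxb)
        have h2 := hsmin' 0 ⟨le_rfl, by linarith⟩
        simp only [eval_sub, eval_C] at h1
        linarith
    have hheq : f - C t * X = X * (g - C t) := by rw [hfg]; ring
    have hh : ∀ x : ℝ, 0 ≤ x → 0 ≤ (f - C t * X).eval x := by
      intro x hx
      rw [hheq]
      simp only [eval_mul, eval_X, eval_sub, eval_C]
      exact mul_nonneg hx (sub_nonneg.2 (hglb x hx))
    have hdvd : (X - C s) ^ 2 ∣ (f - C t * X) := by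
      rcases hsmem.1.eq_or_lt with hs0 | hs0
      · -- s = 0
        have hroot : (g - C t).eval 0 = 0 := by
          simp [htdef, ← hs0]
        obtain ⟨k, hk⟩ := (dvd_iff_isRoot.2 hroot : (X - C (0:ℝ)) ∣ (g - C t))
        refine ⟨k, ?_⟩
        rw [hheq, hk, ← hs0]
        simp only [map_zero, sub_zero]
        ring
      · apply double_dvd
        · rw [hheq]; simp [htdef]
        · apply deriv_zero_of_min _ _ hs0 _ hh
          rw [hheq]; simp [htdef]
    obtain ⟨q, hq1, hq2, hq3, hq4⟩ := finish_step d f hm hd s t hsmem.1 hts hh hdvd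
    exact ⟨s, t, q, hsmem.1, hts, hq1, hq2, hq3, hq4⟩
  · -- Case A : f(0) > 0
    set c := f.eval 1 with hcdef
    -- bound at infinity
    have hpm : (f - C c * X).Monic := by
      rw [sub_eq_add_neg]
      refine hm.add_of_left ?_
      rw [degree_neg, degree_eq_natDegree hm.ne_zero, hd]
      have h1 : (C c * X).degree ≤ (1 : WithBot ℕ) := le_trans (degree_mul_le _ _)
        (by simpa using add_le_add (degree_C_le (a := c)) (degree_X_le (R := ℝ)))
      refine lt_of_le_of_lt h1 ?_
      exact_mod_cast (by omega : (1 : ℕ) < d + 2)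
    have hpd : 0 < (f - C c * X).natDegree := by
      have : (f - C c * X).natDegree = d + 2 := by
        apply natDegree_eq_of_degree_eq_some
        rw [sub_eq_add_neg, degree_add_eq_left_of_degree_lt, degree_eq_natDegree hm.ne_zero, hd]
        rw [degree_neg, degree_eq_natDegree hm.ne_zero, hd]
        have h1 : (C c * X).degree ≤ (1 : WithBot ℕ) := le_trans (degree_mul_le _ _)
          (by simpa using add_le_add (degree_C_le (a := c)) (degree_X_le (R := ℝ)))
        refine lt_of_le_of_lt h1 ?_
        exact_mod_cast (by omega : (1 : ℕ) < d + 2)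
      omega
    obtain ⟨b, hb1, hb⟩ := exists_bound _ hpm hpd
    have hbig : ∀ x : ℝ, b ≤ x → c * x < f.eval x := by
      intro x hx
      have := hb x hx
      simp only [eval_sub, eval_mul, eval_C, eval_X] at this
      linarith
    -- bound near zero
    have hmem : {x : ℝ | f.eval 0 / 2 < f.eval x} ∈ 𝓝 (0:ℝ) := by
      refine (isOpen_lt continuous_const f.continuous).mem_nhds ?_
      simp only [Set.mem_setOf_eq]
      linarith
    obtain ⟨δ, hδpos, hδ⟩ := Metric.mem_nhds_iff.1 hmem
    set ε : ℝ := min (min (δ/2) (f.eval 0 / (2 * (|c| + 1)))) 1 with hεdef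
    have hεpos : 0 < ε := by
      have h1 : 0 < |c| + 1 := by positivity
      apply lt_min (lt_min (by linarith) (by positivity)) one_pos
    have hε1 : ε ≤ 1 := min_le_right _ _
    have hsmall : ∀ x : ℝ, 0 < x → x ≤ ε → c * x < f.eval x := by
      intro x hx hxε
      have hxδ : x < δ := by
        have := le_trans hxε (le_trans (min_le_left _ _) (min_le_left _ _))
        linarith
      have hfx : f.eval 0 / 2 < f.eval x := by
        apply hδ
        rw [Metric.mem_ball, Real.dist_eq, sub_zero, abs_of_pos hx]
        exact hxδ
      have hxc : x ≤ f.eval 0 / (2 * (|c| + 1)) :=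
        le_trans hxε (le_trans (min_le_left _ _) (min_le_right _ _))
      have habs : c * x ≤ |c| * x := mul_le_mul_of_nonneg_right (le_abs_self c) (le_of_lt hx)
      have h2 : 0 < |c| + 1 := by positivity
      have h3 : (|c| + 1) * x ≤ f.eval 0 / 2 := by
        calc (|c| + 1) * x ≤ (|c| + 1) * (f.eval 0 / (2 * (|c| + 1))) :=
              mul_le_mul_of_nonneg_left hxc (le_of_lt h2)
          _ = f.eval 0 / 2 := by field_simp
      nlinarith [abs_nonneg c]
    -- minimize f(x)/x on [ε, b]
    have hcont : ContinuousOn (fun x : ℝ => f.eval x / x) (Set.Icc ε b) := by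
      apply ContinuousOn.div (f.continuous.continuousOn) continuousOn_id
      intro x hx
      exact ne_of_gt (lt_of_lt_of_le hεpos hx.1)
    obtain ⟨s, hsmem, hsmin⟩ := isCompact_Icc.exists_isMinOn
      (Set.nonempty_Icc.2 (by linarith)) hcont
    have hsmin' : ∀ x ∈ Set.Icc ε b, f.eval s / s ≤ f.eval x / x := fun x hx => hsmin hx
    have hspos : 0 < s := lt_of_lt_of_le hεpos hsmem.1
    set t := f.eval s / s with htdef
    have htnn : 0 ≤ t := div_nonneg (hc s (le_of_lt hspos)) (le_of_lt hspos)
    have htc : t ≤ c := by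
      have := hsmin' 1 ⟨hε1, hb1⟩
      simpa using this
    have hh : ∀ x : ℝ, 0 ≤ x → 0 ≤ (f - C t * X).eval x := by
      intro x hx
      simp only [eval_sub, eval_mul, eval_C, eval_X]
      rcases hx.eq_or_lt with rfl | hx
      · simpa using (le_of_lt hf0)
      rcases le_or_gt x ε with hxε | hxε
      · have := hsmall x hx hxε
        nlinarith
      rcases le_or_gt x b with hxb | hxb
      · have h1 := hsmin' x ⟨le_of_lt hxε, hxb⟩
        rw [div_le_div_iff₀ hspos hx] at h1
        rw [← htdef] at *
        have : t * x ≤ f.eval x := by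
          rw [htdef]
          calc t * x = f.eval s * x / s := by rw [htdef]; ring
            _ ≤ f.eval x := by
                rw [div_le_iff₀ hspos]
                linarith
        linarith
      · have := hbig x (le_of_lt hxb)
        nlinarith
    have hdvd : (X - C s) ^ 2 ∣ (f - C t * X) := by
      apply double_dvd
      · simp only [eval_sub, eval_mul, eval_C, eval_X, htdef]
        field_simp
        ring
      · apply deriv_zero_of_min _ _ hspos _ hh
        simp only [eval_sub, eval_mul, eval_C, eval_X, htdef]
        field_simp
        ring
    obtain ⟨q, hq1, hq2, hq3, hq4⟩ := finish_step d f hm hd s t (le_of_lt hspos) htnn hh hdvd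
    exact ⟨s, t, q, le_of_lt hspos, htnn, hq1, hq2, hq3, hq4⟩
noncomputable def Phi : (d : ℕ) → (Fin d → ℝ) → ℝ[X]
  | 0, _ => 1
  | 1, t => X + C (t 0)
  | d + 2, t =>
      (X - C (t ⟨d, by omega⟩)) ^ 2 * Phi d (fun i => t ⟨i.1, by omega⟩)
        + C (t ⟨d + 1, by omega⟩) * X

theorem Phi_surjective (d : ℕ) (f : ℝ[X]) (hm : f.Monic) (hd : f.natDegree = d)
    (hc : ∀ x : ℝ, 0 ≤ x → 0 ≤ f.eval x) :
    ∃ t : Fin d → ℝ, (∀ i, 0 ≤ t i) ∧ f = Phi d t := by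
  induction d using Nat.strong_induction_on generalizing f with
  | _ d ih =>
    match d with
    | 0 =>
      refine ⟨fun i => i.elim0, fun i => i.elim0, ?_⟩
      rw [hm.natDegree_eq_zero.mp hd]
      rfl
    | 1 =>
      refine ⟨fun _ => f.coeff 0, fun _ => ?_, ?_⟩
      · rw [f.coeff_zero_eq_eval_zero]
        exact hc 0 le_rfl
      · conv_lhs => rw [hm.eq_X_add_C hd]
        rw [Phi]
    | d + 2 =>
      obtain ⟨s, t, q, hs, ht, hqm, hqd, hqc, hfq⟩ := key_step d f hm hd hc
      obtain ⟨u, hu, hqu⟩ := ih d (by omega) q hqm hqd hqc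
      refine ⟨fun i => if h : i.1 < d then u ⟨i.1, h⟩ else if i.1 = d then s else t, ?_, ?_⟩
      · intro i
        dsimp only
        split
        · exact hu _
        · split
          · exact hs
          · exact ht
      · show f = Phi (d + 2) _
        rw [Phi]
        have e1 : (fun i : Fin d =>
            (fun i : Fin (d+2) => if h : i.1 < d then u ⟨i.1, h⟩ else if i.1 = d then s else t)
              ⟨i.1, by omega⟩) = u := by
          funext i
          simp [i.2]
        rw [e1, ← hqu, hfq]
        norm_num
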